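/- Let R be a finite type and f : R → ℝ an injective function whose attained values are equally spaced with gap k > 0. Then f is an interval scale: for all a, b, c, d ∈ R with f(a) ≤ f(b) and f(c) ≤ f(d), the cardinality of {r ∈ R : f(a) ≤ f(r) ≤ f(b)} is at most the cardinality of {r ∈ R : f(c) ≤ f(r) ≤ f(d)} if and only if f(b) − f(a) ≤ f(d) − f(c). -/
import Mathlib

open Classical in
private lemma key_equally_spaced {R : Type*} [Fintype R] (f : R → ℝ)
    (hf : Function.Injective f) (k : ℝ)
    (hes : ∀ x y : R, f x < f y → (¬ ∃ z : R, f x < f z ∧ f z < f y) →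
      f y - f x = k) :
    ∀ n : ℕ, ∀ a b : R, f a ≤ f b →
      (Finset.univ.filter (fun r => f a < f r ∧ f r ≤ f b)).card = n →
      f b - f a = k * n := by
  intro n
  induction n with
  | zero =>
    intro a b hab hcard
    rcases lt_or_eq_of_le hab with hlt | heq
    · exfalso
      have hb : b ∈ Finset.univ.filter (fun r => f a < f r ∧ f r ≤ f b) := by
        simp [hlt]
      rw [Finset.card_eq_zero] at hcard
      simp [hcard] at hb
    · simp [← heq]
  | succ m ih =>
    intro a b hab hcard
    have hlt : f a < f b := by
      rcases lt_or_eq_of_le hab with h | h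
      · exact h
      · exfalso
        have : (Finset.univ.filter (fun r => f a < f r ∧ f r ≤ f b)) = ∅ := by
          apply Finset.filter_false_of_mem
          intro x _ hx
          exact absurd (lt_of_lt_of_le hx.1 hx.2) (by rw [h]; exact lt_irrefl _)
        rw [this] at hcard
        simp at hcard
    have hne : (Finset.univ.filter (fun r : R => f a < f r)).Nonempty :=
      ⟨b, by simp [hlt]⟩
    obtain ⟨b', hb'mem, hb'min⟩ := Finset.exists_min_image _ f hne
    have hab' : f a < f b' := by simpa using hb'mem
    have hb'b : f b' ≤ f b := hb'min b (by simp [hlt])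
    have hstep : f b' - f a = k := by
      apply hes a b' hab'
      rintro ⟨z, hz1, hz2⟩
      exact absurd (hb'min z (by simp [hz1])) (not_le.mpr hz2)
    have hset : (Finset.univ.filter (fun r => f a < f r ∧ f r ≤ f b)) =
        insert b' (Finset.univ.filter (fun r => f b' < f r ∧ f r ≤ f b)) := by
      ext r
      simp only [Finset.mem_filter, Finset.mem_univ, true_and, Finset.mem_insert]
      constructor
      · rintro ⟨h1, h2⟩
        rcases lt_or_eq_of_le (hb'min r (by simp [h1])) with h | h
        · exact Or.inr ⟨h, h2⟩
        · exact Or.inl (hf h.symm)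
      · rintro (rfl | ⟨h1, h2⟩)
        · exact ⟨hab', hb'b⟩
        · exact ⟨lt_trans hab' h1, h2⟩
    have hnotmem : b' ∉ (Finset.univ.filter (fun r => f b' < f r ∧ f r ≤ f b)) := by
      simp
    have hcard' : (Finset.univ.filter (fun r => f b' < f r ∧ f r ≤ f b)).card = m := by
      rw [hset, Finset.card_insert_of_notMem hnotmem] at hcard
      omega
    have := ih b' b hb'b hcard'
    push_cast
    linarith

/-- An injective measure `f` on a finite type whose attained values are equally
spaced with gap `k > 0` is an interval scale: the span (cardinality) of
intervals is ordered exactly as the corresponding differences of values. -/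
theorem interval_scale_of_equally_spaced {R : Type*} [Fintype R] (f : R → ℝ)
    (hf : Function.Injective f) (k : ℝ) (hk : 0 < k)
    (hes : ∀ x y : R, f x < f y → (¬ ∃ z : R, f x < f z ∧ f z < f y) →
      f y - f x = k) :
    ∀ a b c d : R, f a ≤ f b → f c ≤ f d →
      ({r : R | f a ≤ f r ∧ f r ≤ f b}.ncard ≤ {r : R | f c ≤ f r ∧ f r ≤ f d}.ncard ↔
        f b - f a ≤ f d - f c) := by
  classical
  intro a b c d hab hcd
  have hncard : ∀ x y : R, f x ≤ f y →
      {r : R | f x ≤ f r ∧ f r ≤ f y}.ncard =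
        (Finset.univ.filter (fun r => f x < f r ∧ f r ≤ f y)).card + 1 := by
    intro x y hxy
    have hset : {r : R | f x ≤ f r ∧ f r ≤ f y} =
        ↑(insert x (Finset.univ.filter (fun r => f x < f r ∧ f r ≤ f y))) := by
      ext r
      simp only [Set.mem_setOf_eq, Finset.coe_insert, Set.mem_insert_iff,
        Finset.mem_coe, Finset.mem_filter, Finset.mem_univ, true_and]
      constructor
      · rintro ⟨h1, h2⟩
        rcases lt_or_eq_of_le h1 with h | h
        · exact Or.inr ⟨h, h2⟩
        · exact Or.inl (hf h.symm)
      · rintro (rfl | ⟨h1, h2⟩)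
        · exact ⟨le_refl _, hxy⟩
        · exact ⟨le_of_lt h1, h2⟩
    rw [hset, Set.ncard_coe_finset, Finset.card_insert_of_notMem (by simp)]
  rw [hncard a b hab, hncard c d hcd]
  set N1 := (Finset.univ.filter (fun r => f a < f r ∧ f r ≤ f b)).card with hN1
  set N2 := (Finset.univ.filter (fun r => f c < f r ∧ f r ≤ f d)).card with hN2
  have h1 := key_equally_spaced f hf k hes N1 a b hab hN1.symm
  have h2 := key_equally_spaced f hf k hes N2 c d hcd hN2.symm
  rw [h1, h2]
  constructor
  · intro h
    have : (N1 : ℝ) ≤ N2 := by exact_mod_cast Nat.le_of_succ_le_succ h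
    nlinarith
  · intro h
    have : (N1 : ℝ) ≤ N2 := le_of_mul_le_mul_left (by linarith) hk
    have : N1 ≤ N2 := by exact_mod_cast this
    omega
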